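/- For every integer n ≥ 3, the maximum running time of the K_4-bootstrap percolation process satisfies M_4(n) ≤ n − 3; that is, for every graph G on n vertices the K_4-bootstrap process starting from G stabilizes by time n − 3. -/

import Mathlib

/-- One step of the `K_r`-bootstrap percolation process: we add every edge `uv` for which
there is an `r`-element vertex set `S` containing `u` and `v` such that every edge within `S`
other than `uv` is already present. -/
def bootStep {V : Type*} (r : ℕ) (G : SimpleGraph V) : SimpleGraph V where
  Adj u v := G.Adj u v ∨ (u ≠ v ∧ ∃ S : Finset V, S.card = r ∧ u ∈ S ∧ v ∈ S ∧
    ∀ x ∈ S, ∀ y ∈ S, x ≠ y → ¬((x = u ∧ y = v) ∨ (x = v ∧ y = u)) → G.Adj x y)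
  symm := by
    constructor
    intro a b h
    rcases h with h | ⟨hne, S, hS, ha, hb, hall⟩
    · exact Or.inl h.symm
    · refine Or.inr ⟨hne.symm, S, hS, hb, ha, ?_⟩
      intro x hx y hy hxy hno
      exact hall x hx y hy hxy (by tauto)
  loopless := by
    constructor
    intro a h
    rcases h with h | ⟨hne, _⟩
    · exact G.irrefl h
    · exact hne rfl

/-- The maximum running time `M_r(n)`: the largest `t` such that some initially infected
graph `G` on `n` vertices satisfies `G_t ≠ G_{t-1}` in the `K_r`-bootstrap process. -/
noncomputable def maxRunTime (r n : ℕ) : ℕ :=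
  sSup {t | ∃ G : SimpleGraph (Fin n), (bootStep r)^[t] G ≠ (bootStep r)^[t - 1] G}

namespace K4Aux

variable {V : Type*}

/-- `W` is a clique in `H` (as a finset). -/
def Clq (H : SimpleGraph V) (W : Finset V) : Prop :=
  ∀ x ∈ W, ∀ y ∈ W, x ≠ y → H.Adj x y

/-- If `u` and `v` have two common neighbours `a, b` that are adjacent, then `uv` appears
after one step of `K₄`-bootstrap. -/
lemma boot_adj [DecidableEq V] (H : SimpleGraph V) {u v a b : V}
    (huv : u ≠ v) (hua : u ≠ a) (hub : u ≠ b) (hva : v ≠ a) (hvb : v ≠ b) (hab : a ≠ b)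
    (h1 : H.Adj u a) (h2 : H.Adj u b) (h3 : H.Adj v a) (h4 : H.Adj v b) (h5 : H.Adj a b) :
    (bootStep 4 H).Adj u v := by
  refine Or.inr ⟨huv, {u, v, a, b}, ?_, by simp, by simp, ?_⟩
  · rw [show ({u, v, a, b} : Finset V) = insert u (insert v (insert a {b})) from rfl,
      Finset.card_insert_of_notMem (by simp [huv, hua, hub]),
      Finset.card_insert_of_notMem (by simp [hva, hvb]),
      Finset.card_insert_of_notMem (by simp [hab]), Finset.card_singleton]
  · intro x hx y hy hxy hno
    simp only [Finset.mem_insert, Finset.mem_singleton] at hx hy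
    have h1' := h1.symm; have h2' := h2.symm; have h3' := h3.symm
    have h4' := h4.symm; have h5' := h5.symm
    rcases hx with rfl | rfl | rfl | rfl <;> rcases hy with rfl | rfl | rfl | rfl
    · exact absurd rfl hxy
    · exact absurd (Or.inl ⟨rfl, rfl⟩) hno
    · exact h1
    · exact h2
    · exact absurd (Or.inr ⟨rfl, rfl⟩) hno
    · exact absurd rfl hxy
    · exact h3
    · exact h4
    · exact h1'
    · exact h3'
    · exact absurd rfl hxy
    · exact h5
    · exact h2'
    · exact h4'
    · exact h5'
    · exact absurd rfl hxy

/-- Decompose a 4-element set containing `u ≠ v` as `{u, v, a, b}`. -/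
lemma four_set [DecidableEq V] {S : Finset V} {u v : V} (hS : S.card = 4)
    (hu : u ∈ S) (hv : v ∈ S) (huv : u ≠ v) :
    ∃ a b, u ≠ a ∧ u ≠ b ∧ v ≠ a ∧ v ≠ b ∧ a ≠ b ∧ a ∈ S ∧ b ∈ S ∧
      ∀ x ∈ S, x = u ∨ x = v ∨ x = a ∨ x = b := by
  have hvS : v ∈ S.erase u := Finset.mem_erase.mpr ⟨huv.symm, hv⟩
  have h2 : ((S.erase u).erase v).card = 2 := by
    rw [Finset.card_erase_of_mem hvS, Finset.card_erase_of_mem hu, hS]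
  obtain ⟨a, b, hab, hT⟩ := Finset.card_eq_two.mp h2
  have haT : a ∈ (S.erase u).erase v := by rw [hT]; simp
  have hbT : b ∈ (S.erase u).erase v := by rw [hT]; simp
  have ha' := Finset.mem_erase.mp haT
  have ha'' := Finset.mem_erase.mp ha'.2
  have hb' := Finset.mem_erase.mp hbT
  have hb'' := Finset.mem_erase.mp hb'.2
  refine ⟨a, b, Ne.symm ha''.1, Ne.symm hb''.1, Ne.symm ha'.1, Ne.symm hb'.1, hab,
    ha''.2, hb''.2, ?_⟩
  intro x hx
  by_cases hxu : x = u
  · exact Or.inl hxu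
  by_cases hxv : x = v
  · exact Or.inr (Or.inl hxv)
  have hxT : x ∈ (S.erase u).erase v :=
    Finset.mem_erase.mpr ⟨hxv, Finset.mem_erase.mpr ⟨hxu, hx⟩⟩
  rw [hT] at hxT
  simp only [Finset.mem_insert, Finset.mem_singleton] at hxT
  tauto

/-- Case `f = ab` with `δ = 0`: the clique `W` (in `H`) contains `a, b`; then
`W ∪ {u, v}` is a bigger clique in `bootStep 4 H` containing `u, v`. -/
lemma aux1 [DecidableEq V] {H : SimpleGraph V} {u v a b : V} {W : Finset V} {m : ℕ}
    (huv : u ≠ v) (hua : u ≠ a) (hub : u ≠ b) (hva : v ≠ a) (hvb : v ≠ b) (hab : a ≠ b)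
    (h1 : H.Adj u a) (h2 : H.Adj u b) (h3 : H.Adj v a) (h4 : H.Adj v b) (h5 : H.Adj a b)
    (huv1 : (bootStep 4 H).Adj u v) (hnuv : ¬H.Adj u v)
    (hW : Clq H W) (haW : a ∈ W) (hbW : b ∈ W) (hcard : m ≤ W.card) :
    ∃ W' : Finset V, u ∈ W' ∧ v ∈ W' ∧ m + 1 ≤ W'.card ∧ Clq (bootStep 4 H) W' := by
  classical
  have hno : ¬(u ∈ W ∧ v ∈ W) := fun h => hnuv (hW u h.1 v h.2 huv)
  refine ⟨insert u (insert v W), by simp, by simp, ?_, ?_⟩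
  · by_cases hvW : v ∈ W
    · have huW : u ∉ W := fun h => hno ⟨h, hvW⟩
      have hins : insert v W = W := Finset.insert_eq_self.mpr hvW
      rw [hins, Finset.card_insert_of_notMem huW]; omega
    · have h' : (insert v W).card = W.card + 1 := Finset.card_insert_of_notMem hvW
      calc m + 1 ≤ (insert v W).card := by omega
        _ ≤ (insert u (insert v W)).card := Finset.card_le_card (Finset.subset_insert _ _)
  · have keyu : ∀ w ∈ W, u ≠ w → (bootStep 4 H).Adj u w := by
      intro w hw hneq
      by_cases hwa : w = a
      · subst hwa; exact Or.inl h1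
      by_cases hwb : w = b
      · subst hwb; exact Or.inl h2
      exact boot_adj H hneq hua hub hwa hwb hab
        h1 h2 (hW w hw a haW hwa) (hW w hw b hbW hwb) h5
    have keyv : ∀ w ∈ W, v ≠ w → (bootStep 4 H).Adj v w := by
      intro w hw hneq
      by_cases hwa : w = a
      · subst hwa; exact Or.inl h3
      by_cases hwb : w = b
      · subst hwb; exact Or.inl h4
      exact boot_adj H hneq hva hvb hwa hwb hab
        h3 h4 (hW w hw a haW hwa) (hW w hw b hbW hwb) h5
    intro x hx y hy hxy
    simp only [Finset.mem_insert] at hx hy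
    rcases hx with rfl | rfl | hx <;> rcases hy with rfl | rfl | hy
    · exact absurd rfl hxy
    · exact huv1
    · exact keyu y hy hxy
    · exact huv1.symm
    · exact absurd rfl hxy
    · exact keyv y hy hxy
    · exact (keyu x hx (Ne.symm hxy)).symm
    · exact (keyv x hx (Ne.symm hxy)).symm
    · exact Or.inl (hW x hx y hy hxy)

/-- Case `f = ua` with `δ = 0`: the clique `W` (in `H`) contains `u, a`. -/
lemma aux2 [DecidableEq V] {H : SimpleGraph V} {u v a b : V} {W : Finset V} {m : ℕ}
    (huv : u ≠ v) (hua : u ≠ a) (hub : u ≠ b) (hva : v ≠ a) (hvb : v ≠ b) (hab : a ≠ b)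
    (h1 : H.Adj u a) (h2 : H.Adj u b) (h3 : H.Adj v a) (h4 : H.Adj v b) (h5 : H.Adj a b)
    (huv1 : (bootStep 4 H).Adj u v) (hnuv : ¬H.Adj u v)
    (hW : Clq H W) (huW : u ∈ W) (haW : a ∈ W) (hcard : m ≤ W.card) :
    ∃ W' : Finset V, u ∈ W' ∧ v ∈ W' ∧
      ((m + 1 ≤ W'.card ∧ Clq (bootStep 4 H) W') ∨
       (m + 2 ≤ W'.card ∧ Clq (bootStep 4 (bootStep 4 H)) W')) := by
  classical
  have hvW : v ∉ W := fun h => hnuv (hW u huW v h huv)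
  by_cases hbW : b ∈ W
  · -- `W' = insert v W`, one new step
    refine ⟨insert v W, by simp [huW], by simp, Or.inl ⟨?_, ?_⟩⟩
    · rw [Finset.card_insert_of_notMem hvW]; omega
    · have keyv : ∀ w ∈ W, v ≠ w → (bootStep 4 H).Adj v w := by
        intro w hw hneq
        by_cases hwu : w = u
        · subst hwu; exact huv1.symm
        by_cases hwa : w = a
        · subst hwa; exact Or.inl h3
        by_cases hwb : w = b
        · subst hwb; exact Or.inl h4
        exact boot_adj H hneq hva hvb hwa hwb hab
          h3 h4 (hW w hw a haW hwa) (hW w hw b hbW hwb) h5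
      intro x hx y hy hxy
      simp only [Finset.mem_insert] at hx hy
      rcases hx with rfl | hx <;> rcases hy with rfl | hy
      · exact absurd rfl hxy
      · exact keyv y hy hxy
      · exact (keyv x hx (Ne.symm hxy)).symm
      · exact Or.inl (hW x hx y hy hxy)
  · -- `W' = insert v (insert b W)`, two new steps
    have keyb : ∀ w ∈ W, b ≠ w → (bootStep 4 H).Adj b w := by
      intro w hw hneq
      by_cases hwu : w = u
      · subst hwu; exact Or.inl h2.symm
      by_cases hwa : w = a
      · subst hwa; exact Or.inl h5.symm
      exact boot_adj H hneq (Ne.symm hub) (Ne.symm hab) hwu hwa hua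
        h2.symm h5.symm (hW w hw u huW hwu) (hW w hw a haW hwa) h1
    have keyv : ∀ w ∈ W, v ≠ w → (bootStep 4 (bootStep 4 H)).Adj v w := by
      intro w hw hneq
      by_cases hwu : w = u
      · subst hwu; exact Or.inl huv1.symm
      by_cases hwa : w = a
      · subst hwa; exact Or.inl (Or.inl h3)
      have hwb : w ≠ b := fun h => hbW (h ▸ hw)
      exact boot_adj (bootStep 4 H) hneq hva hvb hwa hwb hab
        (Or.inl h3) (Or.inl h4) (Or.inl (hW w hw a haW hwa))
        ((keyb w hw (Ne.symm hwb)).symm) (Or.inl h5)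
    have hvb' : v ∉ insert b W := by
      simp only [Finset.mem_insert]
      rintro (rfl | h)
      · exact hvb rfl
      · exact hvW h
    refine ⟨insert v (insert b W), by simp [huW], by simp, Or.inr ⟨?_, ?_⟩⟩
    · rw [Finset.card_insert_of_notMem hvb', Finset.card_insert_of_notMem hbW]; omega
    · intro x hx y hy hxy
      simp only [Finset.mem_insert] at hx hy
      rcases hx with rfl | rfl | hx <;> rcases hy with rfl | rfl | hy
      · exact absurd rfl hxy
      · exact Or.inl (Or.inl h4)
      · exact keyv y hy hxy
      · exact Or.inl (Or.inl h4.symm)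
      · exact absurd rfl hxy
      · exact Or.inl (keyb y hy hxy)
      · exact (keyv x hx (Ne.symm hxy)).symm
      · exact Or.inl (keyb x hx (Ne.symm hxy)).symm
      · exact Or.inl (Or.inl (hW x hx y hy hxy))

/-- The `δ = 1` case: the clique `W` lives in `bootStep 4 H` and contains the endpoints
`p, q` of the freshly born edge `f`; either all of `S = {u,v,a,b}` is inside `W`
(then `W` itself works with `δ' = 0`), or we can grow. -/
lemma aux3 [DecidableEq V] {H : SimpleGraph V} {u v a b p q : V} {W : Finset V} {m : ℕ}
    (huv : u ≠ v) (hua : u ≠ a) (hub : u ≠ b) (hva : v ≠ a) (hvb : v ≠ b) (hab : a ≠ b)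
    (h1 : H.Adj u a) (h2 : H.Adj u b) (h3 : H.Adj v a) (h4 : H.Adj v b) (h5 : H.Adj a b)
    (huv1 : (bootStep 4 H).Adj u v)
    (hpq : p ≠ q) (hp : p = u ∨ p = v ∨ p = a ∨ p = b) (hq : q = u ∨ q = v ∨ q = a ∨ q = b)
    (hpq1 : H.Adj p q)
    (hW : Clq (bootStep 4 H) W) (hpW : p ∈ W) (hqW : q ∈ W) (hcard : m ≤ W.card) :
    ∃ W' : Finset V, u ∈ W' ∧ v ∈ W' ∧
      ((m ≤ W'.card ∧ Clq (bootStep 4 H) W') ∨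
       (m + 1 ≤ W'.card ∧ Clq (bootStep 4 (bootStep 4 H)) W')) := by
  classical
  have hS2 : ∀ x, (x = u ∨ x = v ∨ x = a ∨ x = b) → ∀ y, (y = u ∨ y = v ∨ y = a ∨ y = b) →
      x ≠ y → (bootStep 4 H).Adj x y := by
    intro x hx y hy hxy
    rcases hx with rfl | rfl | rfl | rfl <;> rcases hy with rfl | rfl | rfl | rfl
    · exact absurd rfl hxy
    · exact huv1
    · exact Or.inl h1
    · exact Or.inl h2
    · exact huv1.symm
    · exact absurd rfl hxy
    · exact Or.inl h3
    · exact Or.inl h4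
    · exact Or.inl h1.symm
    · exact Or.inl h3.symm
    · exact absurd rfl hxy
    · exact Or.inl h5
    · exact Or.inl h2.symm
    · exact Or.inl h4.symm
    · exact Or.inl h5.symm
    · exact absurd rfl hxy
  by_cases hall : u ∈ W ∧ v ∈ W ∧ a ∈ W ∧ b ∈ W
  · exact ⟨W, hall.1, hall.2.1, Or.inl ⟨hcard, hW⟩⟩
  · have hnew : ∃ y₀, (y₀ = u ∨ y₀ = v ∨ y₀ = a ∨ y₀ = b) ∧ y₀ ∉ W := by
      by_contra hc
      push_neg at hc
      exact hall ⟨hc u (Or.inl rfl), hc v (Or.inr (Or.inl rfl)),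
        hc a (Or.inr (Or.inr (Or.inl rfl))), hc b (Or.inr (Or.inr (Or.inr rfl)))⟩
    obtain ⟨y₀, hy₀S, hy₀W⟩ := hnew
    have hsub : insert y₀ W ⊆ insert u (insert v (insert a (insert b W))) := by
      intro z hz
      rcases Finset.mem_insert.mp hz with rfl | hz
      · rcases hy₀S with rfl | rfl | rfl | rfl <;> simp
      · simp [hz]
    have hcard' : m + 1 ≤ (insert u (insert v (insert a (insert b W)))).card := by
      have e1 := Finset.card_insert_of_notMem hy₀W
      have e2 := Finset.card_le_card hsub
      omega
    refine ⟨insert u (insert v (insert a (insert b W))), by simp, by simp,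
      Or.inr ⟨hcard', ?_⟩⟩
    have cross : ∀ x ∈ W, (x ≠ u ∧ x ≠ v ∧ x ≠ a ∧ x ≠ b) →
        ∀ y, (y = u ∨ y = v ∨ y = a ∨ y = b) → y ∉ W →
        (bootStep 4 (bootStep 4 H)).Adj x y := by
      rintro x hx ⟨hxu, hxv, hxa, hxb⟩ y hyS hyW
      have hxp : x ≠ p := by rcases hp with rfl | rfl | rfl | rfl <;> assumption
      have hxq : x ≠ q := by rcases hq with rfl | rfl | rfl | rfl <;> assumption
      have hyp' : y ≠ p := fun h => hyW (h ▸ hpW)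
      have hyq' : y ≠ q := fun h => hyW (h ▸ hqW)
      have hxy : x ≠ y := fun h => hyW (h ▸ hx)
      exact boot_adj (bootStep 4 H) hxy hxp hxq hyp' hyq' hpq
        (hW x hx p hpW hxp) (hW x hx q hqW hxq)
        (hS2 y hyS p hp hyp') (hS2 y hyS q hq hyq') (Or.inl hpq1)
    intro x hx y hy hxy
    simp only [Finset.mem_insert] at hx hy
    have hx' : (x = u ∨ x = v ∨ x = a ∨ x = b) ∨ x ∈ W := by
      rcases hx with h | h | h | h | h
      exacts [Or.inl (Or.inl h), Or.inl (Or.inr (Or.inl h)),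
        Or.inl (Or.inr (Or.inr (Or.inl h))), Or.inl (Or.inr (Or.inr (Or.inr h))), Or.inr h]
    have hy' : (y = u ∨ y = v ∨ y = a ∨ y = b) ∨ y ∈ W := by
      rcases hy with h | h | h | h | h
      exacts [Or.inl (Or.inl h), Or.inl (Or.inr (Or.inl h)),
        Or.inl (Or.inr (Or.inr (Or.inl h))), Or.inl (Or.inr (Or.inr (Or.inr h))), Or.inr h]
    rcases hx' with hxS | hxW <;> rcases hy' with hyS | hyW
    · exact Or.inl (hS2 x hxS y hyS hxy)
    · by_cases hxW2 : x ∈ W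
      · exact Or.inl (hW x hxW2 y hyW hxy)
      · by_cases hyS2 : y = u ∨ y = v ∨ y = a ∨ y = b
        · exact Or.inl (hS2 x hxS y hyS2 hxy)
        · push_neg at hyS2
          exact (cross y hyW ⟨hyS2.1, hyS2.2.1, hyS2.2.2.1, hyS2.2.2.2⟩ x hxS hxW2).symm
    · by_cases hyW2 : y ∈ W
      · exact Or.inl (hW x hxW y hyW2 hxy)
      · by_cases hxS2 : x = u ∨ x = v ∨ x = a ∨ x = b
        · exact Or.inl (hS2 x hxS2 y hyS hxy)
        · push_neg at hxS2
          exact cross x hxW ⟨hxS2.1, hxS2.2.1, hxS2.2.2.1, hxS2.2.2.2⟩ y hyS hyW2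
    · exact Or.inl (hW x hxW y hyW hxy)

/-- Packaging helper for the induction step. -/
lemma pack [DecidableEq V] {G : SimpleGraph V} {t : ℕ} {u v : V} {W' : Finset V}
    (hu : u ∈ W') (hv : v ∈ W')
    (h : (t + 5 ≤ W'.card ∧ Clq (bootStep 4 ((bootStep 4)^[t + 1] G)) W') ∨
         (t + 6 ≤ W'.card ∧ Clq (bootStep 4 (bootStep 4 ((bootStep 4)^[t + 1] G))) W')) :
    ∃ (W : Finset V) (δ : ℕ), δ ≤ 1 ∧ u ∈ W ∧ v ∈ W ∧ (t + 1) + 4 + δ ≤ W.card ∧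
      Clq ((bootStep 4)^[(t + 1) + 1 + δ] G) W := by
  have e2 : (bootStep 4)^[(t + 1) + 1] G = bootStep 4 ((bootStep 4)^[t + 1] G) :=
    Function.iterate_succ_apply' _ _ _
  have e3 : (bootStep 4)^[(t + 1) + 1 + 1] G
      = bootStep 4 (bootStep 4 ((bootStep 4)^[t + 1] G)) := by
    rw [Function.iterate_succ_apply', e2]
  rcases h with ⟨hc, hq⟩ | ⟨hc, hq⟩
  · refine ⟨W', 0, by omega, hu, hv, by omega, ?_⟩
    rw [show (t + 1) + 1 + 0 = (t + 1) + 1 from rfl, e2]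
    exact hq
  · refine ⟨W', 1, by omega, hu, hv, by omega, ?_⟩
    rw [e3]
    exact hq

/-- Main lemma: if the edge `uv` is born at time `t+1`, then there is a set `W` of at least
`t + 4 + δ` vertices containing `u, v` which is a clique at time `t + 1 + δ`, `δ ∈ {0,1}`. -/
lemma main [DecidableEq V] (G : SimpleGraph V) :
    ∀ t u v, ((bootStep 4)^[t + 1] G).Adj u v → ¬((bootStep 4)^[t] G).Adj u v →
    ∃ (W : Finset V) (δ : ℕ), δ ≤ 1 ∧ u ∈ W ∧ v ∈ W ∧ t + 4 + δ ≤ W.card ∧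
      Clq ((bootStep 4)^[t + 1 + δ] G) W := by
  intro t
  induction t with
  | zero =>
    intro u v h1 h0
    have h0' : ¬G.Adj u v := h0
    have h1' : G.Adj u v ∨ (u ≠ v ∧ ∃ S : Finset V, S.card = 4 ∧ u ∈ S ∧ v ∈ S ∧
        ∀ x ∈ S, ∀ y ∈ S, x ≠ y → ¬((x = u ∧ y = v) ∨ (x = v ∧ y = u)) → G.Adj x y) := h1
    rcases h1' with h | ⟨hne, S, hS4, huS, hvS, hall⟩
    · exact absurd h h0'
    refine ⟨S, 0, by omega, huS, hvS, by omega, ?_⟩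
    intro x hx y hy hxy
    by_cases hp : (x = u ∧ y = v) ∨ (x = v ∧ y = u)
    · rcases hp with ⟨rfl, rfl⟩ | ⟨rfl, rfl⟩
      · exact h1
      · exact h1.symm
    · exact Or.inl (hall x hx y hy hxy hp)
  | succ t IH =>
    intro u v h1 h0
    rw [Function.iterate_succ_apply'] at h1
    have h1' : ((bootStep 4)^[t + 1] G).Adj u v ∨ (u ≠ v ∧ ∃ S : Finset V,
        S.card = 4 ∧ u ∈ S ∧ v ∈ S ∧
        ∀ x ∈ S, ∀ y ∈ S, x ≠ y → ¬((x = u ∧ y = v) ∨ (x = v ∧ y = u)) →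
          ((bootStep 4)^[t + 1] G).Adj x y) := h1
    rcases h1' with h | ⟨hne, S, hS4, huS, hvS, hall⟩
    · exact absurd h h0
    obtain ⟨a, b, hua, hub, hva, hvb, hab, haS, hbS, hSmem⟩ := four_set hS4 huS hvS hne
    have hadj_ua : ((bootStep 4)^[t + 1] G).Adj u a :=
      hall u huS a haS hua (fun h => h.elim (fun h' => hva h'.2.symm) (fun h' => hne h'.1))
    have hadj_ub : ((bootStep 4)^[t + 1] G).Adj u b :=
      hall u huS b hbS hub (fun h => h.elim (fun h' => hvb h'.2.symm) (fun h' => hne h'.1))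
    have hadj_va : ((bootStep 4)^[t + 1] G).Adj v a :=
      hall v hvS a haS hva (fun h => h.elim (fun h' => hne h'.1.symm) (fun h' => hua h'.2.symm))
    have hadj_vb : ((bootStep 4)^[t + 1] G).Adj v b :=
      hall v hvS b hbS hvb (fun h => h.elim (fun h' => hne h'.1.symm) (fun h' => hub h'.2.symm))
    have hadj_ab : ((bootStep 4)^[t + 1] G).Adj a b :=
      hall a haS b hbS hab (fun h => h.elim (fun h' => hua h'.1.symm) (fun h' => hva h'.1.symm))
    have huv1 : (bootStep 4 ((bootStep 4)^[t + 1] G)).Adj u v := h1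
    by_cases hstab : ∀ x ∈ S, ∀ y ∈ S, x ≠ y →
        ¬((x = u ∧ y = v) ∨ (x = v ∧ y = u)) → ((bootStep 4)^[t] G).Adj x y
    · exfalso
      apply h0
      rw [Function.iterate_succ_apply']
      exact Or.inr ⟨hne, S, hS4, huS, hvS, hstab⟩
    · push_neg at hstab
      obtain ⟨p, hpS, q, hqS, hpq, hno', hq0⟩ := hstab
      have hno : ¬((p = u ∧ q = v) ∨ (p = v ∧ q = u)) := by
        rintro (⟨ha, hb⟩ | ⟨ha, hb⟩)
        · exact hno'.1 ha hb
        · exact hno'.2 ha hb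
      have hpq1 : ((bootStep 4)^[t + 1] G).Adj p q := hall p hpS q hqS hpq hno
      have hp' : p = u ∨ p = v ∨ p = a ∨ p = b := hSmem p hpS
      have hq' : q = u ∨ q = v ∨ q = a ∨ q = b := hSmem q hqS
      obtain ⟨W, δ, hδ, hpW, hqW, hcard, hclq⟩ := IH p q hpq1 hq0
      rcases Nat.le_one_iff_eq_zero_or_eq_one.mp hδ with rfl | rfl
      · -- δ = 0 : clique in `(bootStep 4)^[t+1] G` itself
        have hclq0 : Clq ((bootStep 4)^[t + 1] G) W := hclq
        have hcard0 : t + 4 ≤ W.card := by omega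
        -- dispatch on the shape of the edge pq
        rcases hp' with rfl | rfl | rfl | rfl <;> rcases hq' with rfl | rfl | rfl | rfl
        · exact absurd rfl hpq
        · exact absurd (Or.inl ⟨rfl, rfl⟩) hno
        · -- p = u, q = a
          obtain ⟨W', hu', hv', hres⟩ := aux2 hne hua hub hva hvb hab
            hadj_ua hadj_ub hadj_va hadj_vb hadj_ab huv1 h0 hclq0 hpW hqW hcard0
          exact pack hu' hv' hres
        · -- p = u, q = b
          obtain ⟨W', hu', hv', hres⟩ := aux2 hne hub hua hvb hva hab.symm
            hadj_ub hadj_ua hadj_vb hadj_va hadj_ab.symm huv1 h0 hclq0 hpW hqW hcard0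
          exact pack hu' hv' hres
        · exact absurd (Or.inr ⟨rfl, rfl⟩) hno
        · exact absurd rfl hpq
        · -- p = v, q = a
          obtain ⟨W', hv', hu', hres⟩ := aux2 hne.symm hva hvb hua hub hab
            hadj_va hadj_vb hadj_ua hadj_ub hadj_ab huv1.symm (fun h => h0 h.symm)
            hclq0 hpW hqW hcard0
          exact pack hu' hv' hres
        · -- p = v, q = b
          obtain ⟨W', hv', hu', hres⟩ := aux2 hne.symm hvb hva hub hua hab.symm
            hadj_vb hadj_va hadj_ub hadj_ua hadj_ab.symm huv1.symm (fun h => h0 h.symm)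
            hclq0 hpW hqW hcard0
          exact pack hu' hv' hres
        · -- p = a, q = u
          obtain ⟨W', hu', hv', hres⟩ := aux2 hne hua hub hva hvb hab
            hadj_ua hadj_ub hadj_va hadj_vb hadj_ab huv1 h0 hclq0 hqW hpW hcard0
          exact pack hu' hv' hres
        · -- p = a, q = v
          obtain ⟨W', hv', hu', hres⟩ := aux2 hne.symm hva hvb hua hub hab
            hadj_va hadj_vb hadj_ua hadj_ub hadj_ab huv1.symm (fun h => h0 h.symm)
            hclq0 hqW hpW hcard0
          exact pack hu' hv' hres
        · exact absurd rfl hpq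
        · -- p = a, q = b
          obtain ⟨W', hu', hv', hc', hq'⟩ := aux1 hne hua hub hva hvb hab
            hadj_ua hadj_ub hadj_va hadj_vb hadj_ab huv1 h0 hclq0 hpW hqW hcard0
          exact pack hu' hv' (Or.inl ⟨hc', hq'⟩)
        · -- p = b, q = u
          obtain ⟨W', hu', hv', hres⟩ := aux2 hne hub hua hvb hva hab.symm
            hadj_ub hadj_ua hadj_vb hadj_va hadj_ab.symm huv1 h0 hclq0 hqW hpW hcard0
          exact pack hu' hv' hres
        · -- p = b, q = v
          obtain ⟨W', hv', hu', hres⟩ := aux2 hne.symm hvb hva hub hua hab.symm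
            hadj_vb hadj_va hadj_ub hadj_ua hadj_ab.symm huv1.symm (fun h => h0 h.symm)
            hclq0 hqW hpW hcard0
          exact pack hu' hv' hres
        · -- p = b, q = a
          obtain ⟨W', hu', hv', hc', hq'⟩ := aux1 hne hua hub hva hvb hab
            hadj_ua hadj_ub hadj_va hadj_vb hadj_ab huv1 h0 hclq0 hqW hpW hcard0
          exact pack hu' hv' (Or.inl ⟨hc', hq'⟩)
        · exact absurd rfl hpq
      · -- δ = 1 : clique in `(bootStep 4)^[t+2] G`
        have e2 : (bootStep 4)^[t + 1 + 1] G = bootStep 4 ((bootStep 4)^[t + 1] G) :=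
          Function.iterate_succ_apply' _ _ _
        have hclq1 : Clq (bootStep 4 ((bootStep 4)^[t + 1] G)) W := by
          rw [← e2]; exact hclq
        have hcard1 : t + 5 ≤ W.card := by omega
        obtain ⟨W', hu', hv', hres⟩ := aux3 hne hua hub hva hvb hab
          hadj_ua hadj_ub hadj_va hadj_vb hadj_ab huv1 hpq hp' hq' hpq1
          hclq1 hpW hqW hcard1
        exact pack hu' hv' hres

/-- If the process moves between times `t` and `t+1`, an explicit new edge exists. -/
lemma exists_new_edge {n : ℕ} (G : SimpleGraph (Fin n)) (t : ℕ)
    (h : (bootStep 4)^[t + 1] G ≠ (bootStep 4)^[t] G) :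
    ∃ u v, ((bootStep 4)^[t + 1] G).Adj u v ∧ ¬((bootStep 4)^[t] G).Adj u v := by
  by_contra hc
  push_neg at hc
  apply h
  ext u v
  constructor
  · exact hc u v
  · intro h'
    rw [Function.iterate_succ_apply']
    exact Or.inl h'

/-- Key bound: if the process moves between times `t` and `t+1` on `Fin n`, then `t + 4 ≤ n`. -/
lemma key {n : ℕ} (G : SimpleGraph (Fin n)) (t : ℕ)
    (h : (bootStep 4)^[t + 1] G ≠ (bootStep 4)^[t] G) : t + 4 ≤ n := by
  obtain ⟨u, v, h1, h0⟩ := exists_new_edge G t h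
  obtain ⟨W, δ, hδ, -, -, hcard, -⟩ := main G t u v h1 h0
  have hle : W.card ≤ n := le_trans (Finset.card_le_univ W) (le_of_eq (Finset.card_fin n))
  omega

end K4Aux

/-- For every `n ≥ 3`, `M_4(n) ≤ n - 3`; moreover the `K_4`-bootstrap process starting from
any graph `G` on `n` vertices stabilizes by time `n - 3`, i.e. `G_{n-2} = G_{n-3}`. -/
theorem maxRunTime_K4_upper (n : ℕ) (hn : 3 ≤ n) :
    maxRunTime 4 n ≤ n - 3 ∧
    ∀ G : SimpleGraph (Fin n), (bootStep 4)^[(n - 3) + 1] G = (bootStep 4)^[n - 3] G := by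
  constructor
  · have hub : (n - 3) ∈ upperBounds
        {t | ∃ G : SimpleGraph (Fin n), (bootStep 4)^[t] G ≠ (bootStep 4)^[t - 1] G} := by
      rintro t ⟨G, hG⟩
      match t, hG with
      | 0, hG => exact Nat.zero_le _
      | (s + 1), hG =>
        have := K4Aux.key G s hG
        omega
    exact csSup_le' hub
  · intro G
    by_contra hne
    have := K4Aux.key G (n - 3) hne
    omega
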